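/- arXiv:2502.06183 — 5 statements merged into one kernel-verified Lean document; each statement's English description precedes it below -/
import Mathlib

section
/- Let x ∈ ℝⁿ with ‖x‖ = 1 and let d ∈ ℝⁿ satisfy ⟨x, d⟩ = 0. Then ‖(x + d)/‖x + d‖ - x‖ ≤ ‖d‖. -/
open scoped RealInnerProductSpace

theorem stmt_1 (n : ℕ) (x d : EuclideanSpace ℝ (Fin n)) (hx : ‖x‖ = 1)
    (hxd : ⟪x, d⟫ = 0) :
    ‖‖x + d‖⁻¹ • (x + d) - x‖ ≤ ‖d‖ := by
  set r := ‖x + d‖ with hr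
  have hr2 : r ^ 2 = 1 + ‖d‖ ^ 2 := by
    have := @norm_add_sq_real (EuclideanSpace ℝ (Fin n)) _ _ x d
    rw [hxd] at this
    simpa [hx, pow_two] using this
  have hr1 : (1 : ℝ) ≤ r := by
    nlinarith [norm_nonneg (x + d), sq_nonneg ‖d‖]
  have hrpos : (0 : ℝ) < r := by linarith
  have hinner : ⟪r⁻¹ • (x + d), x⟫ = r⁻¹ := by
    have hdx : ⟪d, x⟫ = 0 := by rw [real_inner_comm]; exact hxd
    rw [real_inner_smul_left, inner_add_left, hdx, real_inner_self_eq_norm_sq, hx]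
    ring
  have hna : ‖r⁻¹ • (x + d)‖ = 1 := by
    rw [norm_smul, Real.norm_eq_abs, abs_of_pos (inv_pos.mpr hrpos), ← hr]
    field_simp
  have hsq : ‖r⁻¹ • (x + d) - x‖ ^ 2 = 2 - 2 * r⁻¹ := by
    rw [@norm_sub_sq_real (EuclideanSpace ℝ (Fin n)) _ _, hna, hinner, hx]
    ring
  have hle : ‖r⁻¹ • (x + d) - x‖ ^ 2 ≤ ‖d‖ ^ 2 := by
    rw [hsq]
    have hinv : r⁻¹ = 1 / r := (one_div r).symm
    have h2 : 2 - 2 * r⁻¹ = 2 * (r - 1) / r := by field_simp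
    rw [h2]
    rw [div_le_iff₀ hrpos]
    nlinarith
  nlinarith [hle, norm_nonneg (r⁻¹ • (x + d) - x), norm_nonneg d]
end

section
/- Let φ : [0,∞) → [0,∞) be a continuous concave function with φ(0) = 0 that is differentiable on (0,∞), and suppose the limit ℓ := lim_{s↓0} φ'(s) exists. Let Y ∈ ℝ^{n×p} and define f(x) = Σ_{i=1}^p φ(|[Yᵀx]_i|). Then f is Lipschitz continuous on ℝⁿ with modulus ℓ √p ‖Y‖₂, where ‖Y‖₂ is the operator norm of Y. -/
open scoped RealInnerProductSpace

open Set Filter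

lemma mono_of_concave_nonneg {φ : ℝ → ℝ} (hφconc : ConcaveOn ℝ (Set.Ici 0) φ)
    (hφnonneg : ∀ s ∈ Set.Ici (0 : ℝ), 0 ≤ φ s) :
    MonotoneOn φ (Set.Ici 0) := by
  intro a ha b hb hab
  rcases eq_or_lt_of_le hab with rfl | hab
  · exact le_rfl
  by_contra hlt
  push_neg at hlt
  have hK : (φ b - φ a) / (b - a) < 0 := div_neg_of_neg_of_pos (by linarith) (by linarith)
  have hKne : (φ b - φ a) / (b - a) ≠ 0 := hK.ne
  have hφb : 0 ≤ φ b := hφnonneg b hb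
  have hc : 0 < (φ b + 1) / (-((φ b - φ a) / (b - a))) :=
    div_pos (by linarith) (by linarith)
  have htb : b < b + (φ b + 1) / (-((φ b - φ a) / (b - a))) := by linarith
  have hslope := hφconc.slope_anti_adjacent ha (ha.trans (hab.trans htb).le) hab htb
  have hd : b + (φ b + 1) / (-((φ b - φ a) / (b - a))) - b
      = (φ b + 1) / (-((φ b - φ a) / (b - a))) := by ring
  have heq : (φ b - φ a) / (b - a) * ((φ b + 1) / (-((φ b - φ a) / (b - a)))) = -(φ b + 1) := by
    rw [mul_comm, div_neg, neg_mul, div_mul_cancel₀ _ hKne]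
  set t : ℝ := b + (φ b + 1) / (-((φ b - φ a) / (b - a))) with htdef
  have hφt : φ t ≤ φ b + -(φ b + 1) := by
    have h1 : (φ t - φ b) / (t - b) * (t - b)
        ≤ (φ b - φ a) / (b - a) * (t - b) :=
      mul_le_mul_of_nonneg_right hslope (by linarith)
    rw [div_mul_cancel₀ _ (by linarith : t - b ≠ 0)] at h1
    rw [hd, heq] at h1
    linarith
  have := hφnonneg t (ha.trans (hab.trans htb).le)
  linarith

/-- ℓ¹-ℓ² comparison on `Fin p`. -/
lemma sum_abs_le_sqrt_card_mul_norm {p : ℕ} (v : EuclideanSpace ℝ (Fin p)) :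
    ∑ i, |v i| ≤ Real.sqrt p * ‖v‖ := by
  have h2 : (∑ i, |v i|) ^ 2 ≤ (p : ℝ) * ∑ i, |v i| ^ 2 := by
    simpa using sq_sum_le_card_mul_sum_sq (s := Finset.univ) (f := fun i => |v i|)
  have hnn : 0 ≤ ∑ i, |v i| := Finset.sum_nonneg fun i _ => abs_nonneg _
  calc ∑ i, |v i| = Real.sqrt ((∑ i, |v i|) ^ 2) := (Real.sqrt_sq hnn).symm
    _ ≤ Real.sqrt ((p : ℝ) * ∑ i, |v i| ^ 2) := Real.sqrt_le_sqrt h2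
    _ = Real.sqrt p * Real.sqrt (∑ i, |v i| ^ 2) := Real.sqrt_mul (by positivity) _
    _ = Real.sqrt p * ‖v‖ := by
        simp [EuclideanSpace.norm_eq, Real.norm_eq_abs]

/-- with `A` playing the role of the linear map `x ↦ Yᵀx`
(note that the operator norm of `Y` equals that of `Yᵀ`), the function
`f(x) = ∑ i, φ(|[Yᵀx]_i|)` is Lipschitz with modulus `ℓ √p ‖Y‖₂`. -/
theorem stmt_3 (n p : ℕ) (φ : ℝ → ℝ) (ℓ : ℝ)
    (hφcont : ContinuousOn φ (Set.Ici 0))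
    (hφconc : ConcaveOn ℝ (Set.Ici 0) φ)
    (hφ0 : φ 0 = 0)
    (hφnonneg : ∀ s ∈ Set.Ici (0 : ℝ), 0 ≤ φ s)
    (hφdiff : DifferentiableOn ℝ φ (Set.Ioi 0))
    (hℓ : Filter.Tendsto (deriv φ) (nhdsWithin 0 (Set.Ioi 0)) (nhds ℓ))
    (A : EuclideanSpace ℝ (Fin n) →L[ℝ] EuclideanSpace ℝ (Fin p))
    (f : EuclideanSpace ℝ (Fin n) → ℝ)
    (hf : ∀ x, f x = ∑ i, φ |A x i|) :
    ∀ x y : EuclideanSpace ℝ (Fin n),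
      |f x - f y| ≤ ℓ * Real.sqrt p * ‖A‖ * ‖x - y‖ := by
  have hmono := mono_of_concave_nonneg hφconc hφnonneg
  have hconc' : ConcaveOn ℝ (Set.Ioi 0) φ :=
    hφconc.subset Set.Ioi_subset_Ici_self (convex_Ioi 0)
  have hdiffAt : ∀ c ∈ Set.Ioi (0 : ℝ), DifferentiableAt ℝ φ c := fun c hc =>
    (hφdiff c hc).differentiableAt (Ioi_mem_nhds hc)
  have hanti : AntitoneOn (deriv φ) (Set.Ioi 0) := hconc'.antitoneOn_deriv hdiffAt
  -- deriv φ c ≤ ℓ for all c > 0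
  have hderiv_le : ∀ c : ℝ, 0 < c → deriv φ c ≤ ℓ := by
    intro c hc
    refine ge_of_tendsto hℓ ?_
    filter_upwards [Ioo_mem_nhdsGT_of_mem (by simp [hc] : (0:ℝ) ∈ Set.Ico (0:ℝ) c)] with s hs
    exact hanti hs.1 hc hs.2.le
  -- ℓ is nonnegative
  have hℓ0 : 0 ≤ ℓ := by
    refine le_trans ?_ (hderiv_le 1 one_pos)
    have hs := hconc'.slope_le_deriv (Set.mem_Ioi.2 one_pos) (by norm_num : (2:ℝ) ∈ Set.Ioi 0)
      one_lt_two (hdiffAt 1 (Set.mem_Ioi.2 one_pos))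
    have hm : φ 1 ≤ φ 2 := hmono (by norm_num) (by norm_num) one_le_two
    rw [slope_def_field] at hs
    have : (0:ℝ) ≤ (φ 2 - φ 1) / (2 - 1) := by
      apply div_nonneg <;> linarith
    linarith
  -- key Lipschitz inequality on [0,∞)
  have hlip : ∀ a b : ℝ, 0 ≤ a → a ≤ b → φ b - φ a ≤ ℓ * (b - a) := by
    intro a b ha hab
    rcases eq_or_lt_of_le hab with rfl | hab
    · simp
    rcases eq_or_lt_of_le ha with rfl | ha
    · -- a = 0 : use the limit
      rw [hφ0, sub_zero]
      have hev : ∀ᶠ s in nhdsWithin 0 (Set.Ioi 0), φ b ≤ φ s + ℓ * (b - s) := by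
        filter_upwards [Ioo_mem_nhdsGT_of_mem
          (by simp [hab] : (0:ℝ) ∈ Set.Ico (0:ℝ) b)] with s hs
        have hsl := hconc'.slope_le_deriv (Set.mem_Ioi.2 hs.1)
          (Set.mem_Ioi.2 (hs.1.trans hs.2)) hs.2 (hdiffAt s hs.1)
        rw [slope_def_field] at hsl
        have h1 : (φ b - φ s) / (b - s) ≤ ℓ := hsl.trans (hderiv_le s hs.1)
        have h2 : (φ b - φ s) / (b - s) * (b - s) ≤ ℓ * (b - s) :=
          mul_le_mul_of_nonneg_right h1 (by linarith [hs.2])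
        rw [div_mul_cancel₀ _ (by linarith [hs.2] : b - s ≠ 0)] at h2
        linarith
      have htend : Filter.Tendsto (fun s => φ s + ℓ * (b - s)) (nhdsWithin 0 (Set.Ioi 0))
          (nhds (φ 0 + ℓ * (b - 0))) := by
        apply Filter.Tendsto.add
        · exact (hφcont 0 Set.self_mem_Ici).mono_left
            (nhdsWithin_mono _ Set.Ioi_subset_Ici_self)
        · exact ((continuous_const.mul (continuous_const.sub continuous_id)).tendsto 0).mono_left
            nhdsWithin_le_nhds
      have := ge_of_tendsto htend hev
      rw [hφ0, sub_zero] at this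
      linarith
    · -- 0 < a
      have hsl := hconc'.slope_le_deriv (Set.mem_Ioi.2 ha) (Set.mem_Ioi.2 (ha.trans hab))
        hab (hdiffAt a ha)
      rw [slope_def_field] at hsl
      have h1 : (φ b - φ a) / (b - a) ≤ ℓ := hsl.trans (hderiv_le a ha)
      have h2 : (φ b - φ a) / (b - a) * (b - a) ≤ ℓ * (b - a) :=
        mul_le_mul_of_nonneg_right h1 (by linarith)
      rw [div_mul_cancel₀ _ (by linarith : b - a ≠ 0)] at h2
      exact h2
  -- pointwise estimate
  have hpt : ∀ a b : ℝ, |φ (|a|) - φ (|b|)| ≤ ℓ * |a - b| := by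
    intro a b
    rcases le_total |a| |b| with h | h
    · have hm : φ |a| ≤ φ |b| := hmono (abs_nonneg a) (abs_nonneg b) h
      rw [abs_of_nonpos (by linarith)]
      have := hlip |a| |b| (abs_nonneg a) h
      have habs : |b| - |a| ≤ |a - b| := by
        rw [abs_sub_comm]; exact (abs_sub_abs_le_abs_sub b a)
      nlinarith [abs_nonneg (a - b)]
    · have hm : φ |b| ≤ φ |a| := hmono (abs_nonneg b) (abs_nonneg a) h
      rw [abs_of_nonneg (by linarith)]
      have := hlip |b| |a| (abs_nonneg b) h
      have habs : |a| - |b| ≤ |a - b| := abs_sub_abs_le_abs_sub a b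
      nlinarith [abs_nonneg (a - b)]
  intro x y
  rw [hf, hf, ← Finset.sum_sub_distrib]
  calc |∑ i, (φ (|A x i|) - φ (|A y i|))| ≤ ∑ i, |φ (|A x i|) - φ (|A y i|)| :=
        Finset.abs_sum_le_sum_abs _ _
    _ ≤ ∑ i, ℓ * |A (x - y) i| := by
        apply Finset.sum_le_sum
        intro i _
        have : A (x - y) i = A x i - A y i := by rw [map_sub]; rfl
        rw [this]
        exact hpt (A x i) (A y i)
    _ = ℓ * ∑ i, |A (x - y) i| := by rw [Finset.mul_sum]
    _ ≤ ℓ * (Real.sqrt p * ‖A (x - y)‖) :=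
        mul_le_mul_of_nonneg_left (sum_abs_le_sqrt_card_mul_norm _) hℓ0
    _ ≤ ℓ * (Real.sqrt p * (‖A‖ * ‖x - y‖)) := by
        apply mul_le_mul_of_nonneg_left _ hℓ0
        exact mul_le_mul_of_nonneg_left (A.le_opNorm _) (Real.sqrt_nonneg _)
    _ = ℓ * Real.sqrt p * ‖A‖ * ‖x - y‖ := by ring
end

section
/- Let f : ℝⁿ → ℝ be Lipschitz continuous with modulus L. Let x ∈ ℝⁿ with ‖x‖ = 1 and d ∈ ℝⁿ with ⟨x, d⟩ = 0, and set x⁺ = (x + d)/‖x + d‖. Then f(x⁺) ≤ f(x + d) + (L/2)‖d‖². -/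
open scoped RealInnerProductSpace

theorem stmt_8 (n : ℕ) (f : EuclideanSpace ℝ (Fin n) → ℝ) (L : ℝ)
    (hL : ∀ a b : EuclideanSpace ℝ (Fin n), |f a - f b| ≤ L * ‖a - b‖)
    (x d : EuclideanSpace ℝ (Fin n)) (hx : ‖x‖ = 1) (hxd : ⟪x, d⟫ = 0) :
    f (‖x + d‖⁻¹ • (x + d)) ≤ f (x + d) + (L / 2) * ‖d‖ ^ 2 := by
  by_cases hd : d = 0
  · subst hd; simp [hx]
  · have hnd : 0 < ‖d‖ := norm_pos_iff.mpr hd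
    have hL0 : 0 ≤ L := by
      have h := hL (x + d) x
      have h' : |f (x + d) - f x| ≤ L * ‖d‖ := by simpa using h
      nlinarith [abs_nonneg (f (x + d) - f x)]
    set r := ‖x + d‖ with hr
    have hr2 : r ^ 2 = 1 + ‖d‖ ^ 2 := by
      rw [hr, norm_add_sq_real, hxd, hx]; ring
    have hr1 : 1 ≤ r := by nlinarith [norm_nonneg (x + d), sq_nonneg ‖d‖]
    have hrpos : 0 < r := lt_of_lt_of_le one_pos hr1
    have key : ‖r⁻¹ • (x + d) - (x + d)‖ ≤ ‖d‖ ^ 2 / 2 := by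
      have e1 : r⁻¹ • (x + d) - (x + d) = (r⁻¹ - 1) • (x + d) := by
        rw [sub_smul, one_smul]
      rw [e1, norm_smul, Real.norm_eq_abs, ← hr]
      have hinv : r⁻¹ ≤ 1 := by
        rw [inv_le_one_iff₀]; right; exact hr1
      have habs : |r⁻¹ - 1| = 1 - r⁻¹ := by
        rw [abs_sub_comm, abs_of_nonneg (by linarith)]
      rw [habs]
      have heq : (1 - r⁻¹) * r = r - 1 := by
        field_simp
      rw [heq]
      nlinarith
    have h := hL (r⁻¹ • (x + d)) (x + d)
    have h2 : L * ‖r⁻¹ • (x + d) - (x + d)‖ ≤ L * (‖d‖ ^ 2 / 2) :=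
      mul_le_mul_of_nonneg_left key hL0
    have h3 : f (r⁻¹ • (x + d)) - f (x + d) ≤ L * (‖d‖ ^ 2 / 2) :=
      le_trans (le_trans (le_abs_self _) h) h2
    linarith
end

section
/- Let ψ : ℝ → ℝ be a convex function with dom ψ = ℝ, let Ψ(y) = Σ_{i=1}^p ψ(y_i) and let Ψ* be its Fenchel conjugate. Fix x* ∈ ℝⁿ, Y ∈ ℝ^{n×p}, β ∈ ℝ. Then the set {u ∈ ℝ^p : ∃ x, ‖x‖ = 1, ‖x - x*‖ ≤ 1, Ψ*(-u) + ⟨u, |Yᵀx|⟩ ≤ β} is bounded. -/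
open scoped RealInnerProductSpace
open Matrix

theorem stmt_11 (n p : ℕ) (ψ : ℝ → ℝ) (hψ : ConvexOn ℝ Set.univ ψ)
    (Ψ : EuclideanSpace ℝ (Fin p) → ℝ) (hΨ : ∀ y, Ψ y = ∑ i, ψ (y i))
    (Ψstar : EuclideanSpace ℝ (Fin p) → EReal)
    (hΨstar : ∀ w, Ψstar w = ⨆ y : EuclideanSpace ℝ (Fin p), ((⟪w, y⟫ - Ψ y : ℝ) : EReal))
    (xstar : EuclideanSpace ℝ (Fin n)) (Y : Matrix (Fin n) (Fin p) ℝ) (β : ℝ) :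
    Bornology.IsBounded
      {u : EuclideanSpace ℝ (Fin p) |
        ∃ x : EuclideanSpace ℝ (Fin n), ‖x‖ = 1 ∧ ‖x - xstar‖ ≤ 1 ∧
          Ψstar (-u) + ((∑ i, u i * |Y.transpose.mulVec x i| : ℝ) : EReal) ≤ (β : EReal)} := by
  -- constants
  set C : ℝ := 1 + ∑ i : Fin p, ∑ j : Fin n, |Y j i| with hC
  have hCsum : ∀ i : Fin p, ∑ j : Fin n, |Y j i| ≤ C - 1 := by
    intro i
    have : (∑ j : Fin n, |Y j i|) ≤ ∑ i : Fin p, ∑ j : Fin n, |Y j i| :=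
      Finset.single_le_sum (f := fun i => ∑ j : Fin n, |Y j i|)
        (fun i _ => Finset.sum_nonneg fun j _ => abs_nonneg _) (Finset.mem_univ i)
    simp [hC]; linarith
  have hC1 : (1 : ℝ) ≤ C := by
    have h : (0:ℝ) ≤ ∑ i : Fin p, ∑ j : Fin n, |Y j i| :=
      Finset.sum_nonneg fun i _ => Finset.sum_nonneg fun j _ => abs_nonneg (Y j i)
    simp [hC]; linarith
  set M : ℝ := max (ψ (-C)) (ψ C) with hM
  apply Bornology.IsBounded.subset (Metric.isBounded_closedBall
    (x := (0 : EuclideanSpace ℝ (Fin p))) (r := β + p * M))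
  rintro u ⟨x, hx1, -, hle⟩
  -- coordinate bound on x
  have hxcoord : ∀ j, |x j| ≤ 1 := by
    intro j
    have h1 : |x j| ^ 2 ≤ ∑ j, |x j| ^ 2 :=
      Finset.single_le_sum (f := fun j => |x j| ^ 2) (fun _ _ => sq_nonneg _)
        (Finset.mem_univ j)
    have h2 : ‖x‖ ^ 2 = ∑ j, |x j| ^ 2 := by
      rw [EuclideanSpace.norm_eq, Real.sq_sqrt (Finset.sum_nonneg fun _ _ => sq_nonneg _)]
      simp [Real.norm_eq_abs]
    nlinarith [abs_nonneg (x j)]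
  set w : Fin p → ℝ := Y.transpose.mulVec x with hw
  have hwb : ∀ i, |w i| ≤ C - 1 := by
    intro i
    calc |w i| = |∑ j, Y j i * x j| := by
          simp [hw, Matrix.mulVec, dotProduct, Matrix.transpose_apply]
      _ ≤ ∑ j, |Y j i * x j| := Finset.abs_sum_le_sum_abs _ _
      _ ≤ ∑ j, |Y j i| := by
          apply Finset.sum_le_sum
          intro j _
          rw [abs_mul]
          calc |Y j i| * |x j| ≤ |Y j i| * 1 :=
                mul_le_mul_of_nonneg_left (hxcoord j) (abs_nonneg _)
            _ = |Y j i| := mul_one _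
      _ ≤ C - 1 := hCsum i
  -- the test point y
  set y : EuclideanSpace ℝ (Fin p) := WithLp.toLp 2 (fun i => |w i| - Real.sign (u i)) with hy
  have hyC : ∀ i, y i ∈ Set.Icc (-C) C := by
    intro i
    have := hwb i
    have habs := abs_nonneg (w i)
    have hs : |Real.sign (u i)| ≤ 1 := by
      rcases Real.sign_apply_eq (u i) with h | h | h <;> rw [h] <;> norm_num
    have := abs_le.mp hs
    constructor <;> simp only [hy] <;> linarith [this.1, this.2]
  have hψy : ∀ i, ψ (y i) ≤ M := by
    intro i
    have hmem : y i ∈ segment ℝ (-C) C := by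
      rw [segment_eq_Icc (by linarith : (-C : ℝ) ≤ C)]; exact hyC i
    exact hψ.le_on_segment (Set.mem_univ _) (Set.mem_univ _) hmem
  -- extract real inequality from the EReal one
  set S : ℝ := ∑ i, u i * |Y.transpose.mulVec x i| with hS
  have hkey : ((⟪-u, y⟫ - Ψ y : ℝ) : EReal) ≤ Ψstar (-u) := by
    rw [hΨstar]
    exact le_iSup (fun y : EuclideanSpace ℝ (Fin p) => ((⟪-u, y⟫ - Ψ y : ℝ) : EReal)) y
  have hE : ((⟪-u, y⟫ - Ψ y + S : ℝ) : EReal) ≤ (β : EReal) := by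
    calc ((⟪-u, y⟫ - Ψ y + S : ℝ) : EReal)
        = ((⟪-u, y⟫ - Ψ y : ℝ) : EReal) + (S : EReal) := by
          rw [← EReal.coe_add]
      _ ≤ Ψstar (-u) + (S : EReal) := add_le_add_left hkey _
      _ ≤ (β : EReal) := hle
  have hR : ⟪-u, y⟫ - Ψ y + S ≤ β := EReal.coe_le_coe_iff.mp hE
  -- compute the inner product
  have hinner : ⟪-u, y⟫ = -S + ∑ i, |u i| := by
    rw [PiLp.inner_apply]
    simp only [RCLike.inner_apply, conj_trivial]
    have : ∀ i : Fin p, (-u : EuclideanSpace ℝ (Fin p)) i * y i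
        = -(u i * |w i|) + |u i| := by
      intro i
      have : u i * Real.sign (u i) = |u i| := by
        rcases lt_trichotomy (u i) 0 with h | h | h
        · rw [Real.sign_of_neg h, abs_of_neg h]; ring
        · simp [h]
        · rw [Real.sign_of_pos h, abs_of_pos h]; ring
      simp only [hy, PiLp.neg_apply]
      ring_nf
      nlinarith [this]
    rw [Finset.sum_congr rfl fun i _ => (mul_comm _ _).trans (this i)]
    rw [Finset.sum_add_distrib]
    simp [hS, hw, Finset.sum_neg_distrib]
  have habs_sum : ∑ i, |u i| ≤ β + p * M := by
    have hΨy : Ψ y ≤ p * M := by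
      rw [hΨ]
      calc ∑ i, ψ (y i) ≤ ∑ _i : Fin p, M := Finset.sum_le_sum fun i _ => hψy i
        _ = p * M := by simp [Finset.sum_const, nsmul_eq_mul]
    rw [hinner] at hR
    linarith
  -- norm bound
  have hnorm : ‖u‖ ≤ ∑ i, |u i| := by
    rw [EuclideanSpace.norm_eq]
    have h1 : ∑ i, ‖u i‖ ^ 2 ≤ (∑ i, ‖u i‖) ^ 2 :=
      Finset.sum_sq_le_sq_sum_of_nonneg fun _ _ => norm_nonneg _
    calc Real.sqrt (∑ i, ‖u i‖ ^ 2) ≤ Real.sqrt ((∑ i, ‖u i‖) ^ 2) :=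
          Real.sqrt_le_sqrt h1
      _ = ∑ i, ‖u i‖ := Real.sqrt_sq (Finset.sum_nonneg fun _ _ => norm_nonneg _)
      _ = ∑ i, |u i| := by simp [Real.norm_eq_abs]
  simp only [Metric.mem_closedBall, dist_zero_right]
  linarith
end

section
/- Let f̂(x) = ‖Yᵀx‖₁ for Y ∈ ℝ^{n×p}, let M be the unit sphere in ℝⁿ, and let F̂ = f̂ + δ_M where δ_M is the indicator function of M. Suppose min_{x∈M} f̂(x) > 0. Then F̂ is a KL function with exponent 1/2: for every x̄ ∈ M there exist c > 0, ε > 0, a > 0 such that dist(0, ∂F̂(x))² ≥ c (F̂(x) - F̂(x̄)) for all x ∈ M with ‖x - x̄‖ ≤ ε and F̂(x̄) < F̂(x) < F̂(x̄) + a. -/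
open scoped RealInnerProductSpace
open Matrix

/-- Convex subdifferential of the ℓ1 norm at `z`. -/
def subdiffL1 {p : ℕ} (z : Fin p → ℝ) : Set (Fin p → ℝ) :=
  {y | ∀ i, |y i| ≤ 1 ∧ (0 < z i → y i = 1) ∧ (z i < 0 → y i = -1)}

/-- `dist(0, ∂F̂(x))` for `x` on the unit sphere: the infimum of
`‖(I - xxᵀ)ζ‖` over `ζ ∈ Y ∂‖·‖₁(Yᵀx)` (cf. Lemma 2.4 of the paper). -/
noncomputable def klSlope {n p : ℕ} (Y : Matrix (Fin n) (Fin p) ℝ)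
    (x : EuclideanSpace ℝ (Fin n)) : ℝ :=
  sInf {r | ∃ y ∈ subdiffL1 (Y.transpose.mulVec x),
    ∃ ζ : EuclideanSpace ℝ (Fin n), ζ = Y.mulVec y ∧ r = ‖ζ - ⟪x, ζ⟫ • x‖}

namespace Stmt13

def J : SignType → Set ℝ
  | SignType.zero => Set.Icc (-1) 1
  | SignType.neg => {-1}
  | SignType.pos => {1}

lemma isCompact_J (s : SignType) : IsCompact (J s) := by
  cases s
  · exact isCompact_Icc
  · exact isCompact_singleton
  · exact isCompact_singleton

lemma cast_mem_J (s : SignType) : (s : ℝ) ∈ J s := by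
  cases s <;> simp [J]

lemma mem_J_sign {z yi : ℝ} (h1 : |yi| ≤ 1) (h2 : 0 < z → yi = 1) (h3 : z < 0 → yi = -1) :
    yi ∈ J (SignType.sign z) := by
  rcases lt_trichotomy z 0 with h | h | h
  · rw [sign_neg h]; simp [J, h3 h]
  · rw [h, sign_zero]; exact abs_le.mp h1
  · rw [sign_pos h]; simp [J, h2 h]

lemma mul_eq_abs {z yi : ℝ} (h : yi ∈ J (SignType.sign z)) : yi * z = |z| := by
  rcases lt_trichotomy z 0 with hz | hz | hz
  · rw [sign_neg hz] at h
    simp only [J, Set.mem_singleton_iff] at h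
    rw [h, abs_of_neg hz]; ring
  · simp [hz]
  · rw [sign_pos hz] at h
    simp only [J, Set.mem_singleton_iff] at h
    rw [h, abs_of_pos hz]; ring

lemma subdiff_mem_pi {p : ℕ} {z y : Fin p → ℝ} (h : y ∈ subdiffL1 z) :
    y ∈ Set.univ.pi fun i => J (SignType.sign (z i)) := by
  intro i _
  obtain ⟨h1, h2, h3⟩ := h i
  exact mem_J_sign h1 h2 h3

lemma sign_mem_subdiff {p : ℕ} (z : Fin p → ℝ) :
    (fun i => ((SignType.sign (z i) : SignType) : ℝ)) ∈ subdiffL1 z := by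
  intro i
  refine ⟨?_, fun h => by simp only []; rw [sign_pos h]; simp,
    fun h => by simp only []; rw [sign_neg h]; simp⟩
  simp only []
  rcases lt_trichotomy (z i) 0 with h | h | h
  · rw [sign_neg h]; simp
  · rw [h, sign_zero]; simp
  · rw [sign_pos h]; simp

lemma inner_mulVec {n p : ℕ} (Y : Matrix (Fin n) (Fin p) ℝ) (x : EuclideanSpace ℝ (Fin n))
    (y : Fin p → ℝ) :
    ⟪x, (WithLp.toLp 2 (Y.mulVec y) : EuclideanSpace ℝ (Fin n))⟫ = ∑ i, y i * Y.transpose.mulVec x i := by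
  simp only [PiLp.inner_apply, RCLike.inner_apply, conj_trivial, Matrix.mulVec,
    dotProduct, PiLp.toLp_apply, Matrix.transpose_apply, Finset.mul_sum, Finset.sum_mul]
  rw [Finset.sum_comm]
  refine Finset.sum_congr rfl fun i _ => ?_
  refine Finset.sum_congr rfl fun j _ => by ring

lemma continuous_phi {n p : ℕ} (Y : Matrix (Fin n) (Fin p) ℝ) :
    Continuous (fun y : Fin p → ℝ => (WithLp.toLp 2 (Y.mulVec y) : EuclideanSpace ℝ (Fin n))) := by
  have h : (fun y : Fin p → ℝ => (WithLp.toLp 2 (Y.mulVec y) : EuclideanSpace ℝ (Fin n))) =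
      (EuclideanSpace.equiv (Fin n) ℝ).symm ∘ (fun y => Y.mulVec y) := rfl
  rw [h]
  exact (EuclideanSpace.equiv (Fin n) ℝ).symm.continuous.comp
    Y.mulVecLin.continuous_of_finiteDimensional

end Stmt13

/-- if the optimal value of `min_{‖x‖=1} ‖Yᵀx‖₁` is positive, then
`F̂ = ‖Yᵀ·‖₁ + δ_M` is a KL function with exponent 1/2. -/
theorem stmt_13 (n p : ℕ) (Y : Matrix (Fin n) (Fin p) ℝ)
    (fhat : EuclideanSpace ℝ (Fin n) → ℝ)
    (hfhat : ∀ x, fhat x = ∑ i, |Y.transpose.mulVec x i|)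
    (hpos : ∀ x : EuclideanSpace ℝ (Fin n), ‖x‖ = 1 → 0 < fhat x) :
    ∀ xbar : EuclideanSpace ℝ (Fin n), ‖xbar‖ = 1 →
      ∃ c > (0 : ℝ), ∃ ε > (0 : ℝ), ∃ a > (0 : ℝ),
        ∀ x : EuclideanSpace ℝ (Fin n), ‖x‖ = 1 → ‖x - xbar‖ ≤ ε →
          fhat xbar < fhat x → fhat x < fhat xbar + a →
            c * (fhat x - fhat xbar) ≤ (klSlope Y x) ^ 2 := by
  intro xbar hxbar
  classical
  set lam : ℝ := fhat xbar with hlamdef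
  have hlam0 : 0 < lam := hpos xbar hxbar
  set Box : (Fin p → SignType) → Set (Fin p → ℝ) :=
    (fun σ => Set.univ.pi fun i => Stmt13.J (σ i)) with hBoxdef
  set S : (Fin p → SignType) → Set (EuclideanSpace ℝ (Fin n)) :=
    (fun σ => (fun y : Fin p → ℝ => (WithLp.toLp 2 (Y.mulVec y) : EuclideanSpace ℝ (Fin n))) '' Box σ)
    with hSdef
  have hScompact : ∀ σ, IsCompact (S σ) := fun σ =>
    (isCompact_univ_pi fun i => Stmt13.isCompact_J (σ i)).image (Stmt13.continuous_phi Y)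
  have hSne : ∀ σ, (S σ).Nonempty := fun σ =>
    ⟨_, Set.mem_image_of_mem _ (fun i _ => Stmt13.cast_mem_J (σ i))⟩
  set v : EuclideanSpace ℝ (Fin n) := lam • xbar with hvdef
  set g : (Fin p → SignType) → ℝ :=
    (fun σ => if v ∈ S σ then 1 else Metric.infDist v (S σ)) with hgdef
  have hg : ∀ σ, 0 < g σ := by
    intro σ
    by_cases h : v ∈ S σ
    · simp [hgdef, h]
    · simp only [hgdef, if_neg h]
      exact (((hScompact σ).isClosed).notMem_iff_infDist_pos (hSne σ)).mp h
  have hne : (Finset.univ : Finset (Fin p → SignType)).Nonempty := Finset.univ_nonempty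
  set δ : ℝ := Finset.univ.inf' hne g with hδdef
  have hδ0 : 0 < δ := (Finset.lt_inf'_iff hne).mpr fun σ _ => hg σ
  refine ⟨δ, hδ0, δ / (4 * (lam + 1)), by positivity, δ / 4, by positivity, ?_⟩
  intro x hx hxε hlt hlta
  set z : Fin p → ℝ := Y.transpose.mulVec x with hzdef
  set σx : Fin p → SignType := (fun i => SignType.sign (z i)) with hσdef
  have hval : ∀ y : Fin p → ℝ, y ∈ Box σx →
      ⟪x, (WithLp.toLp 2 (Y.mulVec y) : EuclideanSpace ℝ (Fin n))⟫ = fhat x := by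
    intro y hy
    rw [Stmt13.inner_mulVec, hfhat]
    exact Finset.sum_congr rfl fun i _ => Stmt13.mul_eq_abs (hy i (Set.mem_univ i))
  by_cases hmem : v ∈ S σx
  · exfalso
    obtain ⟨yl, hyl, hYyl⟩ := hmem
    have hYyl' : (WithLp.toLp 2 (Y.mulVec yl) : EuclideanSpace ℝ (Fin n)) = v := hYyl
    have h1 : fhat x = lam * ⟪x, xbar⟫ := by
      rw [← hval yl hyl, hYyl', hvdef, real_inner_smul_right]
    have h2 : ⟪x, xbar⟫ ≤ 1 := by
      have h := real_inner_le_norm x xbar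
      rw [hx, hxbar] at h; linarith
    nlinarith
  · have hinf : δ ≤ Metric.infDist v (S σx) := by
      have h := Finset.inf'_le g (Finset.mem_univ σx)
      rw [hgdef] at h
      simp only [if_neg hmem] at h
      exact h
    have hD : fhat x - lam < δ / 4 := by linarith
    have hbound : ∀ r ∈ {r | ∃ y ∈ subdiffL1 (Y.transpose.mulVec x),
        ∃ ζ : EuclideanSpace ℝ (Fin n), ζ = Y.mulVec y ∧ r = ‖ζ - ⟪x, ζ⟫ • x‖},
        δ / 2 ≤ r := by
      rintro r ⟨y, hy, ζ, hζ, hrr⟩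
      have hybox : y ∈ Box σx := Stmt13.subdiff_mem_pi hy
      have hζ' : ζ = WithLp.toLp 2 (Y.mulVec y) := by rw [← hζ]
      have hζS : ζ ∈ S σx := hζ' ▸ Set.mem_image_of_mem _ hybox
      have hinner : ⟪x, ζ⟫ = fhat x := by rw [hζ']; exact hval y hybox
      have h3 : δ ≤ ‖ζ - v‖ := by
        refine le_trans hinf ?_
        rw [← dist_eq_norm, dist_comm]
        exact Metric.infDist_le_dist_of_mem hζS
      have h4 : ‖fhat x • x - v‖ ≤ (fhat x - lam) + lam * ‖x - xbar‖ := by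
        have hdec : fhat x • x - v = (fhat x - lam) • x + lam • (x - xbar) := by
          rw [hvdef, sub_smul, smul_sub]; abel
        rw [hdec]
        refine le_trans (norm_add_le _ _) ?_
        rw [norm_smul, norm_smul, hx, Real.norm_eq_abs, Real.norm_eq_abs,
          abs_of_pos (show (0:ℝ) < fhat x - lam by linarith), abs_of_pos hlam0]
        simp
      have h5 : lam * ‖x - xbar‖ ≤ δ / 4 := by
        have h51 : lam * ‖x - xbar‖ ≤ lam * (δ / (4 * (lam + 1))) :=
          mul_le_mul_of_nonneg_left hxε (le_of_lt hlam0)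
        have h52 : lam * (δ / (4 * (lam + 1))) ≤ δ / 4 := by
          rw [mul_comm, div_mul_eq_mul_div, div_le_div_iff₀ (by positivity) (by norm_num)]
          nlinarith
        linarith
      have h6 : ‖ζ - v‖ ≤ ‖ζ - fhat x • x‖ + ‖fhat x • x - v‖ := by
        have : ζ - v = (ζ - fhat x • x) + (fhat x • x - v) := by abel
        rw [this]; exact norm_add_le _ _
      rw [hrr, hinner]
      linarith
    have hwit : ({r | ∃ y ∈ subdiffL1 (Y.transpose.mulVec x),
        ∃ ζ : EuclideanSpace ℝ (Fin n), ζ = Y.mulVec y ∧ r = ‖ζ - ⟪x, ζ⟫ • x‖}).Nonempty := by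
      refine ⟨_, ⟨fun i => ((SignType.sign (Y.transpose.mulVec x i) : SignType) : ℝ),
        Stmt13.sign_mem_subdiff _, WithLp.toLp 2 (Y.mulVec _), rfl, rfl⟩⟩
    have hslope : δ / 2 ≤ klSlope Y x := by
      rw [klSlope]
      exact le_csInf hwit hbound
    have hslope0 : (0:ℝ) ≤ δ / 2 := by positivity
    have hsq : (δ / 2) ^ 2 ≤ (klSlope Y x) ^ 2 := pow_le_pow_left₀ hslope0 hslope 2
    nlinarith
end
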